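/- Let L be a bounded chain. A finite L-colored graph G is HH-homogeneous if and only if it is MH-homogeneous. -/

import Mathlib

/-- An `L`-colored graph on vertex set `V`: vertex colors and symmetric,
irreflexive edge colors (color `⊥` means "no edge"). -/
structure LGraph (L : Type*) [PartialOrder L] [BoundedOrder L] (V : Type*) where
  vcol : V → L
  ecol : V → V → L
  ecol_irrefl : ∀ x, ecol x x = ⊥
  ecol_symm : ∀ x y, ecol x y = ecol y x

variable {L V : Type*} [PartialOrder L] [BoundedOrder L]

/-- An endomorphism of an `L`-colored graph weakly increases all colors. -/
def LGraph.IsEndo (G : LGraph L V) (f : V → V) : Prop :=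
  (∀ x, G.vcol x ≤ G.vcol (f x)) ∧ (∀ x y, G.ecol x y ≤ G.ecol (f x) (f y))

/-- A homomorphism from the finite induced substructure on `S` into `G`. -/
def LGraph.IsPartialHom (G : LGraph L V) (S : Set V) (f : V → V) : Prop :=
  (∀ x ∈ S, G.vcol x ≤ G.vcol (f x)) ∧
  (∀ x ∈ S, ∀ y ∈ S, G.ecol x y ≤ G.ecol (f x) (f y))

/-- `G` is MH-homogeneous: every monomorphism between finite induced
substructures extends to an endomorphism. -/
def LGraph.MH (G : LGraph L V) : Prop :=
  ∀ S : Set V, S.Finite → ∀ f : V → V, Set.InjOn f S → G.IsPartialHom S f →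
    ∃ g : V → V, G.IsEndo g ∧ ∀ x ∈ S, g x = f x

/-- `G` is HH-homogeneous: every homomorphism between finite induced
substructures extends to an endomorphism. -/
def LGraph.HH (G : LGraph L V) : Prop :=
  ∀ S : Set V, S.Finite → ∀ f : V → V, G.IsPartialHom S f →
    ∃ g : V → V, G.IsEndo g ∧ ∀ x ∈ S, g x = f x

/-- Adjacency: edge color is nonzero. -/
def LGraph.Adj (G : LGraph L V) (x y : V) : Prop := G.ecol x y ≠ ⊥

/-- Two vertices are connected if joined by a path of edges of nonzero color. -/
def LGraph.Conn (G : LGraph L V) (x y : V) : Prop := Relation.ReflTransGen G.Adj x y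

/-- `S` is a connected component of `G`. -/
def LGraph.IsComponent (G : LGraph L V) (S : Set V) : Prop :=
  ∃ x : V, S = {y | G.Conn x y}

/-- All vertices of `G` have the same color. -/
def LGraph.VertexUniform (G : LGraph L V) : Prop := ∃ α : L, ∀ x, G.vcol x = α

/-- `G` restricted to `S` is a uniform `L`-colored graph: all vertices of one
color and all edges between distinct vertices of one fixed nonzero color. -/
def LGraph.UniformOn (G : LGraph L V) (S : Set V) : Prop :=
  (∃ α : L, ∀ x ∈ S, G.vcol x = α) ∧
  (∃ β : L, ⊥ < β ∧ ∀ x ∈ S, ∀ y ∈ S, x ≠ y → G.ecol x y = β)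

/-- `G[S]` is isomorphic to `U(n, α, β)`, the connected uniform graph on `n`
vertices, all colored `α`, with all edges colored `β ≻ ⊥`. -/
def LGraph.IsU (G : LGraph L V) (S : Set V) (n : ℕ) (α β : L) : Prop :=
  S.ncard = n ∧ (∀ x ∈ S, G.vcol x = α) ∧ ⊥ < β ∧
  (∀ x ∈ S, ∀ y ∈ S, x ≠ y → G.ecol x y = β)

/-- `L` is a diamond: all elements other than `⊥` and `⊤` are pairwise
incomparable. -/
def IsDiamond (L : Type*) [PartialOrder L] [BoundedOrder L] : Prop :=
  ∀ a b : L, a ≠ ⊥ → a ≠ ⊤ → b ≠ ⊥ → b ≠ ⊤ → a ≤ b → a = b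

/-- An automorphism of an `L`-colored graph. -/
def LGraph.IsAuto (G : LGraph L V) (f : V → V) : Prop :=
  Function.Bijective f ∧ (∀ x, G.vcol (f x) = G.vcol x) ∧
  (∀ x y, G.ecol (f x) (f y) = G.ecol x y)

/-- `G` is ultrahomogeneous: every isomorphism between finite induced
substructures extends to an automorphism. -/
def LGraph.Ultra (G : LGraph L V) : Prop :=
  ∀ S : Set V, S.Finite → ∀ f : V → V, Set.InjOn f S →
    (∀ x ∈ S, G.vcol (f x) = G.vcol x) →
    (∀ x ∈ S, ∀ y ∈ S, G.ecol (f x) (f y) = G.ecol x y) →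
    ∃ g : V → V, G.IsAuto g ∧ ∀ x ∈ S, g x = f x

/-- One-point extension of partial homomorphisms, from MH-homogeneity. -/
lemma LGraph.mh_one_point {L V : Type*} [LinearOrder L] [BoundedOrder L]
    (G : LGraph L V) (hMH : G.MH) (S : Set V) (hS : S.Finite) (f : V → V)
    (hf : G.IsPartialHom S f) (p : V) :
    ∃ f' : V → V, G.IsPartialHom (insert p S) f' ∧ ∀ x ∈ S, f' x = f x := by
  classical
  by_cases hp : p ∈ S
  · exact ⟨f, by rwa [Set.insert_eq_self.2 hp], fun x _ => rfl⟩
  -- For each fiber of `f` on `S`, pick a representative maximizing `ecol p ·`.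
  have hrep : ∀ z : V, (S ∩ f ⁻¹' {z}).Nonempty →
      ∃ a ∈ S ∩ f ⁻¹' {z}, ∀ b ∈ S ∩ f ⁻¹' {z}, G.ecol p b ≤ G.ecol p a :=
    fun z hz => Set.exists_max_image _ (G.ecol p) (hS.inter_of_left _) hz
  choose rep hrepmem hrepmax using fun z => fun h : (S ∩ f ⁻¹' {z}).Nonempty => hrep z h
  set r : V → V := fun x =>
    if h : (S ∩ f ⁻¹' {f x}).Nonempty then rep (f x) h else p with hr
  have hrS : ∀ x ∈ S, r x ∈ S ∧ f (r x) = f x ∧ G.ecol p x ≤ G.ecol p (r x) := by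
    intro x hx
    have hne : (S ∩ f ⁻¹' {f x}).Nonempty := ⟨x, hx, rfl⟩
    have hmem := hrepmem (f x) hne
    have hmax := hrepmax (f x) hne x ⟨hx, rfl⟩
    simp only [hr, dif_pos hne]
    exact ⟨hmem.1, hmem.2, hmax⟩
  -- restrict f to the transversal T
  set T : Set V := r '' S with hT
  have hTS : T ⊆ S := by
    rintro _ ⟨x, hx, rfl⟩; exact (hrS x hx).1
  have hTfin : T.Finite := hS.image r
  have hinj : Set.InjOn f T := by
    rintro _ ⟨x, hx, rfl⟩ _ ⟨y, hy, rfl⟩ h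
    have hx' := (hrS x hx).2.1
    have hy' := (hrS y hy).2.1
    have hfxy : f x = f y := by rw [← hx', ← hy', h]
    simp only [hr, hfxy]
  have hfT : G.IsPartialHom T f :=
    ⟨fun x hx => hf.1 x (hTS hx), fun x hx y hy => hf.2 x (hTS hx) y (hTS hy)⟩
  obtain ⟨g, hg, hgT⟩ := hMH T hTfin f hinj hfT
  refine ⟨fun x => if x = p then g p else f x, ⟨?_, ?_⟩, ?_⟩
  · intro x hx
    by_cases h : x = p
    · simp only [if_pos h, h]; exact hg.1 p
    · rcases hx with hx | hx
      · exact absurd hx h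
      · simp only [if_neg h]; exact hf.1 x hx
  · have key : ∀ y ∈ S, G.ecol p y ≤ G.ecol (g p) (f y) := by
      intro y hy
      obtain ⟨hyS, hfy, hmax⟩ := hrS y hy
      calc G.ecol p y ≤ G.ecol p (r y) := hmax
        _ ≤ G.ecol (g p) (g (r y)) := hg.2 p (r y)
        _ = G.ecol (g p) (f (r y)) := by rw [hgT (r y) ⟨y, hy, rfl⟩]
        _ = G.ecol (g p) (f y) := by rw [hfy]
    intro x hx y hy
    by_cases hxp : x = p <;> by_cases hyp : y = p
    · simp only [if_pos hxp, hxp, hyp, G.ecol_irrefl]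
      exact bot_le
    · rcases hy with hy | hy
      · exact absurd hy hyp
      · simp only [if_pos hxp, if_neg hyp, hxp]
        exact key y hy
    · rcases hx with hx | hx
      · exact absurd hx hxp
      · show G.ecol x y ≤
            G.ecol (if x = p then g p else f x) (if y = p then g p else f y)
        rw [if_neg hxp, if_pos hyp, hyp, G.ecol_symm x p, G.ecol_symm (f x) (g p)]
        exact key x hx
    · rcases hx with hx | hx
      · exact absurd hx hxp
      rcases hy with hy | hy
      · exact absurd hy hyp
      simp only [if_neg hxp, if_neg hyp]
      exact hf.2 x hx y hy
  · intro x hx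
    have : x ≠ p := fun h => hp (h ▸ hx)
    simp only [if_neg this]

/-- Theorem, (1) ↔ (2). -/
theorem stmt7 {L V : Type*} [LinearOrder L] [BoundedOrder L] [Finite V]
    (G : LGraph L V) :
    G.HH ↔ G.MH := by
  constructor
  · intro hHH S hS f _ hf
    exact hHH S hS f hf
  · intro hMH
    have key : ∀ n : ℕ, ∀ S : Set V, Sᶜ.ncard = n → ∀ f : V → V,
        G.IsPartialHom S f →
        ∃ g : V → V, G.IsEndo g ∧ ∀ x ∈ S, g x = f x := by
      intro n
      induction n with
      | zero =>
        intro S hc f hf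
        have hcempty : Sᶜ = ∅ := (Set.ncard_eq_zero (Set.toFinite _)).1 hc
        have hSuniv : S = Set.univ := by
          simpa using congrArg compl hcempty
        subst hSuniv
        exact ⟨f, ⟨fun x => hf.1 x trivial, fun x y => hf.2 x trivial y trivial⟩,
          fun x _ => rfl⟩
      | succ n ih =>
        intro S hc f hf
        have hne : Sᶜ.Nonempty := by
          rw [← Set.ncard_pos (Set.toFinite _), hc]; omega
        obtain ⟨p, hp⟩ := hne
        obtain ⟨f', hf', hagree⟩ := G.mh_one_point hMH S (Set.toFinite S) f hf p
        have hcard : (insert p S)ᶜ.ncard = n := by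
          have h1 : (insert p S)ᶜ = Sᶜ \ {p} := by
            ext z; simp [and_comm]
          rw [h1, Set.ncard_diff_singleton_of_mem hp, hc]
          omega
        obtain ⟨g, hg, hag⟩ := ih (insert p S) hcard f' hf'
        exact ⟨g, hg, fun x hx =>
          (hag x (Set.mem_insert_of_mem _ hx)).trans (hagree x hx)⟩
    intro S hS f hf
    exact key Sᶜ.ncard S rfl f hf
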